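/- Let U be an (m+n)-by-(m+n) unitary matrix written in block form U = [[A, B], [C, D]] where A is m-by-m and D is n-by-n. For z in the open unit disk, define the transfer function Ψ(z) = A + zB(I − zD)^{-1}C (note I − zD is invertible since ‖D‖ ≤ 1 and |z| < 1). Then for all z in the open unit disk, I − Ψ(z)*Ψ(z) = (1 − |z|²) C*(I − z̄D*)^{-1}(I − zD)^{-1}C. -/

import Mathlib

open Matrix

theorem transfer_function_identity (m n : ℕ)
    (A : Matrix (Fin m) (Fin m) ℂ) (B : Matrix (Fin m) (Fin n) ℂ)
    (C : Matrix (Fin n) (Fin m) ℂ) (D : Matrix (Fin n) (Fin n) ℂ)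
    (hU : Matrix.fromBlocks A B C D ∈ Matrix.unitaryGroup (Fin m ⊕ Fin n) ℂ)
    (z : ℂ) (hz : ‖z‖ < 1) :
    (1 : Matrix (Fin m) (Fin m) ℂ) -
      (A + z • (B * (1 - z • D)⁻¹ * C))ᴴ * (A + z • (B * (1 - z • D)⁻¹ * C)) =
    (((1 - ‖z‖ ^ 2 : ℝ) : ℂ)) •
      (Cᴴ * (1 - (starRingEnd ℂ z) • Dᴴ)⁻¹ * ((1 - z • D)⁻¹ * C)) := by
  have hs : star (Matrix.fromBlocks A B C D) * Matrix.fromBlocks A B C D = 1 := hU.1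
  rw [Matrix.star_eq_conjTranspose, Matrix.fromBlocks_conjTranspose,
    Matrix.fromBlocks_multiply, ← Matrix.fromBlocks_one, Matrix.fromBlocks_inj] at hs
  obtain ⟨h11, h12, h21, h22⟩ := hs
  -- invertibility of 1 - z • D
  have hreal : ∀ (k : ℕ) (v : Fin k → ℂ),
      star v ⬝ᵥ v = ((∑ i, Complex.normSq (v i) : ℝ) : ℂ) := by
    intro k v
    simp [dotProduct, Complex.normSq_eq_conj_mul_self]
  have hdet : IsUnit (1 - z • D).det := by
    rw [isUnit_iff_ne_zero]
    intro h
    obtain ⟨v, hv0, hv⟩ := (Matrix.exists_mulVec_eq_zero_iff).2 h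
    have hx : v = z • (D *ᵥ v) := by
      have := sub_eq_zero.2 hv.symm
      simpa [Matrix.sub_mulVec, Matrix.smul_mulVec, sub_eq_zero] using hv
    -- norms
    have e1 : star v ⬝ᵥ v = (starRingEnd ℂ z * z) * (star (D *ᵥ v) ⬝ᵥ (D *ᵥ v)) := by
      conv_lhs => rw [hx]
      simp only [smul_dotProduct, dotProduct_smul, star_smul, starRingEnd_apply,
        smul_eq_mul]
      ring
    have e2 : star (B *ᵥ v) ⬝ᵥ (B *ᵥ v) + star (D *ᵥ v) ⬝ᵥ (D *ᵥ v) = star v ⬝ᵥ v := by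
      have : star v ⬝ᵥ ((Bᴴ * B + Dᴴ * D) *ᵥ v) = star v ⬝ᵥ v := by rw [h22]; simp
      rw [← this]
      simp [Matrix.add_mulVec, dotProduct_add, ← Matrix.mulVec_mulVec,
        Matrix.dotProduct_mulVec, Matrix.star_mulVec]
    set a := (∑ i, Complex.normSq (v i) : ℝ) with ha
    set b := (∑ i, Complex.normSq ((D *ᵥ v) i) : ℝ) with hb
    set c := (∑ i, Complex.normSq ((B *ᵥ v) i) : ℝ) with hc
    rw [hreal, hreal] at e1
    rw [hreal, hreal, hreal] at e2
    have hzz : (starRingEnd ℂ z * z) = ((‖z‖ ^ 2 : ℝ) : ℂ) := by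
      rw [mul_comm, Complex.mul_conj]
      norm_cast
      rw [Complex.normSq_eq_norm_sq]
    rw [hzz, ← Complex.ofReal_mul] at e1
    have e1' : a = ‖z‖ ^ 2 * b := Complex.ofReal_inj.1 e1
    have e2' : c + b = a := by exact_mod_cast e2
    have hb0 : 0 ≤ b := Finset.sum_nonneg fun i _ => Complex.normSq_nonneg _
    have hc0 : 0 ≤ c := Finset.sum_nonneg fun i _ => Complex.normSq_nonneg _
    have ha0 : 0 ≤ a := Finset.sum_nonneg fun i _ => Complex.normSq_nonneg _
    have hz2 : ‖z‖ ^ 2 < 1 := by nlinarith [norm_nonneg z]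
    have haz : a = 0 := by nlinarith
    apply hv0
    funext i
    have := (Finset.sum_eq_zero_iff_of_nonneg
      (fun i _ => Complex.normSq_nonneg (v i))).1 haz i (Finset.mem_univ i)
    exact Complex.normSq_eq_zero.1 this
  -- notation
  set E : Matrix (Fin n) (Fin n) ℂ := 1 - z • D with hEdef
  set F : Matrix (Fin n) (Fin n) ℂ := 1 - (starRingEnd ℂ z) • Dᴴ with hFdef
  have hEF : Eᴴ = F := by
    rw [hEdef, hFdef, Matrix.conjTranspose_sub, Matrix.conjTranspose_one,
      Matrix.conjTranspose_smul]
    rfl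
  have hFdet : IsUnit F.det := by
    rw [← hEF, Matrix.det_conjTranspose]
    exact hdet.star
  have hER : ∀ X : Matrix (Fin n) (Fin m) ℂ, E * (E⁻¹ * X) = X := fun X => by
    rw [← Matrix.mul_assoc, Matrix.mul_nonsing_inv _ hdet, Matrix.one_mul]
  have hFinvF : ∀ X : Matrix (Fin n) (Fin m) ℂ, F⁻¹ * (F * X) = X := fun X => by
    rw [← Matrix.mul_assoc, Matrix.nonsing_inv_mul _ hFdet, Matrix.one_mul]
  have hRH : (E⁻¹)ᴴ = F⁻¹ := by rw [Matrix.conjTranspose_nonsing_inv, hEF]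
  have hN : F * E + (starRingEnd ℂ z) • (Dᴴ * E) + z • (F * D)
      - ((starRingEnd ℂ z) * z) • (1 - Dᴴ * D)
      = (1 - (starRingEnd ℂ z) * z) • (1 : Matrix (Fin n) (Fin n) ℂ) := by
    rw [hEdef, hFdef]
    simp only [Matrix.mul_sub, Matrix.sub_mul, Matrix.mul_one, Matrix.one_mul,
      smul_mul_assoc, mul_smul_comm, smul_smul, smul_sub, sub_smul, one_smul]
    module
  have hzz2 : ((1 - ‖z‖ ^ 2 : ℝ) : ℂ) = 1 - (starRingEnd ℂ z) * z := by
    push_cast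
    rw [mul_comm, Complex.mul_conj]
    norm_cast
    rw [Complex.normSq_eq_norm_sq]
  rw [hzz2]
  have hAA : Aᴴ * A = 1 - Cᴴ * C := eq_sub_of_add_eq h11
  have hAB' : Aᴴ * B = -(Cᴴ * D) := eq_neg_of_add_eq_zero_left h12
  have hBA' : Bᴴ * A = -(Dᴴ * C) := eq_neg_of_add_eq_zero_left h21
  have hBB' : Bᴴ * B = 1 - Dᴴ * D := eq_sub_of_add_eq h22
  have hABX : ∀ X : Matrix (Fin n) (Fin m) ℂ, Aᴴ * (B * X) = -(Cᴴ * (D * X)) := fun X => by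
    rw [← Matrix.mul_assoc, hAB', Matrix.neg_mul, Matrix.mul_assoc]
  have hBBX : ∀ X : Matrix (Fin n) (Fin m) ℂ, Bᴴ * (B * X) = X - Dᴴ * (D * X) := fun X => by
    rw [← Matrix.mul_assoc, hBB', Matrix.sub_mul, Matrix.one_mul, Matrix.mul_assoc]
  have key : (1 - (starRingEnd ℂ z) * z) • (Cᴴ * F⁻¹ * (E⁻¹ * C))
      = Cᴴ * (F⁻¹ * ((F * E + (starRingEnd ℂ z) • (Dᴴ * E) + z • (F * D)
          - ((starRingEnd ℂ z) * z) • (1 - Dᴴ * D)) * (E⁻¹ * C))) := by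
    rw [hN]
    simp only [Matrix.smul_mul, Matrix.mul_smul, Matrix.one_mul, Matrix.mul_assoc]
  rw [key]
  simp only [conjTranspose_add, Matrix.conjTranspose_smul, conjTranspose_mul, hRH,
    starRingEnd_apply, Matrix.add_mul, Matrix.mul_add, Matrix.sub_mul, Matrix.mul_sub,
    smul_mul_assoc, mul_smul_comm, Matrix.smul_mul, Matrix.mul_smul, smul_smul,
    Matrix.mul_one, Matrix.one_mul,
    Matrix.mul_assoc, hER, hFinvF, hAA, hABX, hBBX, hBA', mul_neg, neg_mul,
    Matrix.mul_neg, Matrix.neg_mul, smul_neg, smul_sub, sub_smul, one_smul]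
  module
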